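/- For pairwise distinct complex numbers λ₁,…,λ_k with 0 < |λ_i| < 1 and any nonnegative integer S, the sum ∑_{m₁+⋯+m_k=S} λ₁^{|m₁|}⋯λ_k^{|m_k|} over integer tuples equals ∑_{j=1}^k λ_j^{S+k-1} ∏_{ℓ≠j} (1-λ_ℓ²)/((λ_j-λ_ℓ)(1-λ_jλ_ℓ)). -/

import Mathlib

open Finset

private lemma aux_hasSum_two (T : ℕ) {a b : ℂ} (ha : ‖a‖ < 1) (hb : ‖b‖ < 1) (hab : a ≠ b) :
    HasSum (fun m : ℤ => b ^ m.natAbs * a ^ ((T : ℤ) - m).natAbs)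
      (a ^ (T+1) * (1 - b^2) / ((a - b) * (1 - a*b)) +
       b ^ (T+1) * (1 - a^2) / ((b - a) * (1 - a*b))) := by
  have hab1 : (1 : ℂ) - a * b ≠ 0 := by
    intro h
    have : ‖a * b‖ < 1 := by
      calc ‖a * b‖ = ‖a‖ * ‖b‖ := norm_mul a b
      _ < 1 := by nlinarith [norm_nonneg a, norm_nonneg b]
    rw [sub_eq_zero] at h
    rw [← h] at this; simp at this
  have hba : b - a ≠ 0 := sub_ne_zero.mpr (Ne.symm hab)
  have hab' : a - b ≠ 0 := sub_ne_zero.mpr hab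
  have hgeo : HasSum (fun n : ℕ => (a*b) ^ n) (1 - a*b)⁻¹ :=
    hasSum_geometric_of_norm_lt_one (by
      calc ‖a * b‖ = ‖a‖ * ‖b‖ := norm_mul a b
      _ < 1 := by nlinarith [norm_nonneg a, norm_nonneg b])
  set f : ℤ → ℂ := fun m => b ^ m.natAbs * a ^ ((T : ℤ) - m).natAbs with hf
  -- nonneg part
  have hshift : HasSum (fun n : ℕ => f (n + (T+1) : ℕ))
      (b ^ (T+1) * a * (1 - a*b)⁻¹) := by
    have : (fun n : ℕ => f (n + (T+1) : ℕ)) = fun n : ℕ => b ^ (T+1) * a * (a*b) ^ n := by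
      funext n
      have h1 : ((n + (T+1) : ℕ) : ℤ).natAbs = n + (T + 1) := by omega
      have h2 : ((T : ℤ) - ((n + (T+1) : ℕ) : ℤ)).natAbs = n + 1 := by
        push_cast; omega
      rw [hf]; simp only [h1, h2]
      ring
    rw [this]
    exact hgeo.mul_left _
  have hfin : ∑ i ∈ range (T+1), f (i : ℕ) = (b ^ (T+1) - a ^ (T+1)) / (b - a) := by
    rw [eq_div_iff hba, ← geom_sum₂_mul b a (T+1)]
    congr 1
    apply Finset.sum_congr rfl
    intro i hi
    rw [Finset.mem_range] at hi
    have h1 : ((i : ℤ)).natAbs = i := by omega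
    have h2 : ((T : ℤ) - (i : ℤ)).natAbs = T + 1 - 1 - i := by omega
    rw [hf]; simp only [h1, h2]
  have hpos : HasSum (fun n : ℕ => f n)
      (b ^ (T+1) * a * (1 - a*b)⁻¹ + (b ^ (T+1) - a ^ (T+1)) / (b - a)) := by
    have := (hasSum_nat_add_iff (f := fun n : ℕ => f n) (T+1)).mp hshift
    rwa [hfin] at this
  -- negative part
  have hneg : HasSum (fun n : ℕ => f (-(n+1)))
      (b * a ^ (T+1) * (1 - a*b)⁻¹) := by
    have : (fun n : ℕ => f (-(n+1) : ℤ)) = fun n : ℕ => b * a ^ (T+1) * (a*b) ^ n := by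
      funext n
      have h1 : ((-(n+1) : ℤ)).natAbs = n + 1 := by omega
      have h2 : ((T : ℤ) - (-(n+1) : ℤ)).natAbs = T + n + 1 := by omega
      rw [hf]; simp only [h1, h2]
      ring
    rw [this]
    exact hgeo.mul_left _
  have htot := hpos.of_nat_of_neg_add_one hneg
  convert htot using 1
  rw [inv_eq_one_div]
  generalize hc : 1 - a * b = c at hab1 ⊢
  field_simp
  rw [← hc]
  ring

private lemma aux_hasSum_two' (T : ℤ) {a b : ℂ} (ha : ‖a‖ < 1) (hb : ‖b‖ < 1) (hab : a ≠ b) :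
    HasSum (fun m : ℤ => b ^ m.natAbs * a ^ (T - m).natAbs)
      (a ^ (T.natAbs+1) * (1 - b^2) / ((a - b) * (1 - a*b)) +
       b ^ (T.natAbs+1) * (1 - a^2) / ((b - a) * (1 - a*b))) := by
  rcases le_or_gt 0 T with hT | hT
  · obtain ⟨n, rfl⟩ : ∃ n : ℕ, T = (n : ℤ) := ⟨T.natAbs, by omega⟩
    simpa only [Int.natAbs_natCast] using aux_hasSum_two n ha hb hab
  · have h := aux_hasSum_two T.natAbs ha hb hab
    have key : (fun m : ℤ => b ^ m.natAbs * a ^ ((T.natAbs : ℤ) - m).natAbs) ∘ (Equiv.neg ℤ)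
        = fun m : ℤ => b ^ m.natAbs * a ^ (T - m).natAbs := by
      funext m
      simp only [Function.comp_apply, Equiv.neg_apply]
      have h1 : ((-m : ℤ)).natAbs = m.natAbs := by omega
      have h2 : ((T.natAbs : ℤ) - (-m)).natAbs = (T - m).natAbs := by omega
      rw [h1, h2]
    have := ((Equiv.neg ℤ).hasSum_iff).mpr h
    rwa [key] at this

private lemma aux_summable_abs (r : ℝ) (h0 : 0 ≤ r) (h : r < 1) :
    Summable (fun m : ℤ => r ^ m.natAbs) := by
  apply Summable.of_nat_of_neg_add_one
  · apply Summable.congr (summable_geometric_of_lt_one h0 h)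
    intro n; simp
  · apply Summable.congr ((summable_geometric_of_lt_one h0 h).mul_left r)
    intro n
    have : ((-(n+1) : ℤ)).natAbs = n + 1 := by omega
    rw [this, pow_succ]; ring

private lemma aux_summable_pi (k : ℕ) (lam : Fin k → ℂ) (h : ∀ i, ‖lam i‖ < 1) :
    Summable (fun f : Fin k → ℤ => ∏ i, lam i ^ (f i).natAbs) := by
  induction k with
  | zero =>
    haveI : Unique (Fin 0 → ℤ) := Pi.uniqueOfIsEmpty _
    exact .of_finite
  | succ k ih =>
    rw [← (Fin.consEquiv (fun _ : Fin (k+1) => ℤ)).summable_iff]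
    have heq : ((fun f : Fin (k+1) → ℤ => ∏ i, lam i ^ (f i).natAbs) ∘
          (Fin.consEquiv (fun _ : Fin (k+1) => ℤ)))
        = fun p : ℤ × (Fin k → ℤ) =>
            lam 0 ^ p.1.natAbs * ∏ i : Fin k, lam i.succ ^ (p.2 i).natAbs := by
      funext p
      simp only [Function.comp_apply, Fin.consEquiv_apply]
      rw [Fin.prod_univ_succ]
      simp [Fin.cons_zero, Fin.cons_succ]
    rw [heq]
    have h1 : Summable (fun m : ℤ => ‖lam 0 ^ m.natAbs‖) :=
      (aux_summable_abs ‖lam 0‖ (norm_nonneg _) (h 0)).congr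
        (fun m => by rw [norm_pow])
    have h2 : Summable (fun f : Fin k → ℤ => ‖∏ i : Fin k, lam i.succ ^ (f i).natAbs‖) :=
      (ih (fun i => lam i.succ) (fun i => h i.succ)).norm
    have h3 := h1.mul_norm h2
    exact Summable.of_norm h3

open Polynomial in
private lemma aux_keyPoly (k : ℕ) (hk : 1 ≤ k) (μ : Fin k → ℂ) (hμ0 : ∀ i, μ i ≠ 0)
    (hinj : Function.Injective μ) (hprod : ∀ i j, μ i * μ j ≠ 1) (x : ℂ) :
    ∑ j, μ j ^ (k-1) / (∏ l ∈ univ.erase j, ((μ j - μ l) * (1 - μ j * μ l))) *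
      ∏ l ∈ univ.erase j, ((x - μ l) * (1 - x * μ l)) = x ^ (k-1) := by
  set d : Fin k → ℂ := fun j => ∏ l ∈ univ.erase j, ((μ j - μ l) * (1 - μ j * μ l)) with hd_def
  have hd : ∀ j, d j ≠ 0 := by
    intro j
    rw [hd_def]
    apply Finset.prod_ne_zero_iff.mpr
    intro l hl
    rw [Finset.mem_erase] at hl
    refine mul_ne_zero (sub_ne_zero.mpr ?_) ?_
    · exact fun h => hl.1 (hinj h).symm
    · intro h
      exact hprod j l (by linear_combination -h)
  set P : ℂ[X] := (∑ j, C (μ j ^ (k-1) / d j) *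
      ∏ l ∈ univ.erase j, ((X - C (μ l)) * (1 - X * C (μ l)))) - X ^ (k-1) with hP_def
  have hevalP : ∀ y : ℂ, P.eval y = (∑ j, μ j ^ (k-1) / d j *
      ∏ l ∈ univ.erase j, ((y - μ l) * (1 - y * μ l))) - y ^ (k-1) := by
    intro y
    rw [hP_def]
    simp only [eval_sub, eval_pow, eval_X, eval_finset_sum, eval_mul, eval_C, eval_prod,
      eval_one, eval_sub, eval_mul, eval_X, eval_C]
  have hcard : ∀ j : Fin k, #(univ.erase j) = k - 1 := by
    intro j
    rw [Finset.card_erase_of_mem (Finset.mem_univ j), Finset.card_univ, Fintype.card_fin]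
  have hdeg : P.natDegree < 2 * k := by
    have h1 : (∑ j, C (μ j ^ (k-1) / d j) *
        ∏ l ∈ univ.erase j, ((X - C (μ l)) * (1 - X * C (μ l)) : ℂ[X])).natDegree ≤ 2*(k-1) := by
      apply Polynomial.natDegree_sum_le_of_forall_le
      intro j _
      refine le_trans (Polynomial.natDegree_mul_le) ?_
      rw [Polynomial.natDegree_C]
      simp only [zero_add]
      refine le_trans (Polynomial.natDegree_prod_le _ _) ?_
      have hb : ∀ l ∈ univ.erase j,
          ((X - C (μ l)) * (1 - X * C (μ l)) : ℂ[X]).natDegree ≤ 2 := by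
        intro l _
        refine le_trans Polynomial.natDegree_mul_le ?_
        have e1 : ((X - C (μ l) : ℂ[X])).natDegree ≤ 1 := by
          simp [Polynomial.natDegree_X_sub_C]
        have e2 : ((1 - X * C (μ l) : ℂ[X])).natDegree ≤ 1 := by
          refine le_trans (Polynomial.natDegree_sub_le _ _) ?_
          simp only [Polynomial.natDegree_one]
          refine max_le (by norm_num) (le_trans Polynomial.natDegree_mul_le ?_)
          simp [Polynomial.natDegree_X]
        omega
      refine le_trans (Finset.sum_le_sum hb) ?_
      rw [Finset.sum_const, hcard j, smul_eq_mul]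
      omega
    have h2 := Polynomial.natDegree_sub_le
      (∑ j, C (μ j ^ (k-1) / d j) *
        ∏ l ∈ univ.erase j, ((X - C (μ l)) * (1 - X * C (μ l)) : ℂ[X]))
      (X ^ (k-1))
    rw [← hP_def] at h2
    have h3 : ((X : ℂ[X]) ^ (k-1)).natDegree ≤ k - 1 := by
      simp [Polynomial.natDegree_X_pow]
    omega
  have hzero : P = 0 := by
    apply Polynomial.eq_zero_of_natDegree_lt_card_of_eval_eq_zero P
      (f := Sum.elim μ (fun i => (μ i)⁻¹)) (ι := Fin k ⊕ Fin k)
    · rintro (i | i) (j | j) h <;> simp only [Sum.elim_inl, Sum.elim_inr] at h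
      · exact congrArg Sum.inl (hinj h)
      · exact absurd (by rw [h]; exact inv_mul_cancel₀ (hμ0 j)) (hprod i j)
      · exact absurd (by rw [← h]; exact inv_mul_cancel₀ (hμ0 i)) (hprod j i)
      · exact congrArg Sum.inr (hinj (inv_injective h))
    · rintro (i | i)
      · simp only [Sum.elim_inl]
        rw [hevalP, sub_eq_zero]
        rw [Finset.sum_eq_single i]
        · have h5 : ∏ l ∈ univ.erase i, ((μ i - μ l) * (1 - μ i * μ l)) = d i := rfl
          rw [h5, div_mul_cancel₀ _ (hd i)]
        · intro j _ hji
          apply mul_eq_zero_of_right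
          apply Finset.prod_eq_zero (Finset.mem_erase.mpr ⟨hji.symm, Finset.mem_univ i⟩)
          simp
        · intro h; exact absurd (Finset.mem_univ i) h
      · simp only [Sum.elim_inr]
        rw [hevalP, sub_eq_zero]
        rw [Finset.sum_eq_single i]
        · have hfac : ∀ l ∈ univ.erase i, ((μ i)⁻¹ - μ l) * (1 - (μ i)⁻¹ * μ l)
              = (μ i ^ 2)⁻¹ * ((μ i - μ l) * (1 - μ i * μ l)) := by
            intro l _
            field_simp [hμ0 i]
          have key : ∏ l ∈ univ.erase i, (((μ i)⁻¹ - μ l) * (1 - (μ i)⁻¹ * μ l))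
              = ((μ i ^ 2)⁻¹) ^ (k-1) * d i := by
            rw [Finset.prod_congr rfl hfac, Finset.prod_mul_distrib, Finset.prod_const, hcard i]
          rw [key]
          calc μ i ^ (k-1) / d i * ((μ i ^ 2)⁻¹ ^ (k-1) * d i)
              = (μ i ^ (k-1) * (μ i ^ 2)⁻¹ ^ (k-1)) * (d i / d i) := by ring
            _ = μ i ^ (k-1) * (μ i ^ 2)⁻¹ ^ (k-1) := by rw [div_self (hd i), mul_one]
            _ = (μ i * (μ i ^ 2)⁻¹) ^ (k-1) := by rw [mul_pow]
            _ = ((μ i)⁻¹) ^ (k-1) := by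
                congr 1
                rw [sq, mul_inv, ← mul_assoc, mul_inv_cancel₀ (hμ0 i), one_mul]
        · intro j _ hji
          apply mul_eq_zero_of_right
          apply Finset.prod_eq_zero (Finset.mem_erase.mpr ⟨hji.symm, Finset.mem_univ i⟩)
          rw [inv_mul_cancel₀ (hμ0 i)]
          ring
        · intro h; exact absurd (Finset.mem_univ i) h
    · rw [Fintype.card_sum, Fintype.card_fin]
      omega
  have hfin := hevalP x
  rw [hzero, Polynomial.eval_zero] at hfin
  linear_combination -hfin

private lemma aux_erase_last (n : ℕ) :
    (Finset.univ : Finset (Fin (n+1))).erase (Fin.last n) = Finset.univ.map Fin.castSuccEmb := by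
  ext x
  simp only [Finset.mem_erase, Finset.mem_univ, and_true, Finset.mem_map, Fin.castSuccEmb,
    Function.Embedding.coeFn_mk, true_and]
  constructor
  · intro hx
    rcases Fin.eq_castSucc_or_eq_last x with ⟨y, rfl⟩ | rfl
    · exact ⟨y, rfl⟩
    · exact absurd rfl hx
  · rintro ⟨y, rfl⟩
    exact (Fin.castSucc_lt_last y).ne

private lemma aux_erase_castSucc (n : ℕ) (j : Fin n) :
    (Finset.univ : Finset (Fin (n+1))).erase j.castSucc
      = insert (Fin.last n) ((Finset.univ.erase j).map Fin.castSuccEmb) := by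
  ext x
  simp only [Finset.mem_erase, Finset.mem_univ, and_true, Finset.mem_insert, Finset.mem_map,
    Fin.castSuccEmb, Function.Embedding.coeFn_mk, true_and]
  constructor
  · intro hx
    rcases Fin.eq_castSucc_or_eq_last x with ⟨y, rfl⟩ | rfl
    · exact Or.inr ⟨y, fun h => hx (by rw [h]), rfl⟩
    · exact Or.inl rfl
  · rintro (rfl | ⟨y, hy, rfl⟩)
    · exact (Fin.castSucc_lt_last j).ne'
    · exact fun h => hy (Fin.castSucc_injective n h)

private lemma aux_prod_erase_last (n : ℕ) (h : Fin (n+1) → ℂ) :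
    ∏ l ∈ Finset.univ.erase (Fin.last n), h l = ∏ l : Fin n, h l.castSucc := by
  rw [aux_erase_last, Finset.prod_map]
  rfl

private lemma aux_prod_erase_castSucc (n : ℕ) (j : Fin n) (h : Fin (n+1) → ℂ) :
    ∏ l ∈ Finset.univ.erase j.castSucc, h l
      = h (Fin.last n) * ∏ l ∈ Finset.univ.erase j, h l.castSucc := by
  rw [aux_erase_castSucc, Finset.prod_insert, Finset.prod_map]
  · rfl
  · simp only [Finset.mem_map, Fin.castSuccEmb, Function.Embedding.coeFn_mk]
    rintro ⟨y, -, hy⟩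
    exact (Fin.castSucc_lt_last y).ne hy


private def aux_equiv (k : ℕ) (T : ℤ) :
    {f : Fin (k+1) → ℤ // ∑ i, f i = T} ≃
      Σ m : ℤ, {g : Fin k → ℤ // ∑ i, g i = T - m} where
  toFun f := ⟨f.1 (Fin.last k), ⟨fun i => f.1 i.castSucc, by
    show ∑ i : Fin k, f.1 i.castSucc = T - f.1 (Fin.last k)
    have := f.2
    rw [Fin.sum_univ_castSucc] at this
    omega⟩⟩
  invFun p := ⟨Fin.snoc p.2.1 p.1, by
    rw [Fin.sum_univ_castSucc]
    simp only [Fin.snoc_castSucc, Fin.snoc_last]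
    have := p.2.2
    omega⟩
  left_inv f := by
    apply Subtype.ext
    exact Fin.snoc_init_self f.1
  right_inv p := by
    rcases p with ⟨m, g, hg⟩
    apply Sigma.subtype_ext
    · show (Fin.snoc g m : Fin (k+1) → ℤ) (Fin.last k) = m
      exact Fin.snoc_last _ _
    · funext i
      show (Fin.snoc g m : Fin (k+1) → ℤ) i.castSucc = g i
      exact Fin.snoc_castSucc _ _ i

private lemma aux_equiv_spec (k : ℕ) (T : ℤ) (f : {f : Fin (k+1) → ℤ // ∑ i, f i = T}) :
    (aux_equiv k T f).1 = f.1 (Fin.last k) ∧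
      ∀ i : Fin k, ((aux_equiv k T f).2 : Fin k → ℤ) i = f.1 i.castSucc :=
  ⟨rfl, fun i => rfl⟩

private lemma aux_main (k : ℕ) (hk : 1 ≤ k) :
    ∀ (lam : Fin k → ℂ), (∀ i, ‖lam i‖ < 1) → (∀ i, lam i ≠ 0) → Function.Injective lam →
    ∀ T : ℤ,
    (∑' m : {f : Fin k → ℤ // ∑ i, f i = T}, ∏ i, lam i ^ ((m : Fin k → ℤ) i).natAbs)
      = ∑ j, lam j ^ (T.natAbs + k - 1) *
          ∏ l ∈ univ.erase j, (1 - lam l ^ 2) / ((lam j - lam l) * (1 - lam j * lam l)) := by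
  induction k, hk using Nat.le_induction with
  | base =>
    intro lam hlam hne hinj T
    have h0 : ((fun _ => T : Fin 1 → ℤ)) ∈ {f : Fin 1 → ℤ | ∑ i, f i = T} := by simp
    rw [tsum_eq_single (⟨fun _ => T, by simp⟩ : {f : Fin 1 → ℤ // ∑ i, f i = T}) ?_]
    · have h1 : (univ : Finset (Fin 1)).erase 0 = ∅ := by
        apply Finset.eq_empty_of_forall_notMem
        intro x hx
        rw [Finset.mem_erase] at hx
        exact hx.1 (Subsingleton.elim _ _)
      conv_lhs => rw [Fin.prod_univ_one]
      conv_rhs => rw [Fin.sum_univ_one]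
      rw [h1, Finset.prod_empty, mul_one]
      show lam 0 ^ T.natAbs = lam 0 ^ (T.natAbs + 1 - 1)
      norm_num
    · rintro ⟨f, hf⟩ hb
      exfalso
      apply hb
      apply Subtype.ext
      funext i
      have hi : i = 0 := Subsingleton.elim _ _
      rw [Fin.sum_univ_one] at hf
      rw [hi]
      exact hf
  | succ k hk ih =>
    intro lam hlam hne hinj T
    set Λ : ℂ := lam (Fin.last k) with hΛ
    set μ : Fin k → ℂ := fun i => lam i.castSucc with hμ
    have hμlt : ∀ i, ‖μ i‖ < 1 := fun i => hlam _
    have hμ0 : ∀ i, μ i ≠ 0 := fun i => hne _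
    have hμinj : Function.Injective μ := fun i j h => Fin.castSucc_injective k (hinj h)
    have hΛlt : ‖Λ‖ < 1 := hlam _
    have hΛ0 : Λ ≠ 0 := hne _
    have hμΛ : ∀ j, μ j ≠ Λ := fun j h => (Fin.castSucc_lt_last j).ne (hinj h)
    have hone : ∀ x y : ℂ, ‖x‖ < 1 → ‖y‖ < 1 → x * y ≠ 1 := by
      intro x y hx hy h
      have h2 : ‖x * y‖ < 1 := by
        rw [norm_mul]; nlinarith [norm_nonneg x, norm_nonneg y]
      rw [h] at h2; simp at h2
    have hsub0 : Summable (fun f : {f : Fin (k+1) → ℤ // ∑ i, f i = T} =>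
        ∏ i, lam i ^ ((f : Fin (k+1) → ℤ) i).natAbs) :=
      (aux_summable_pi (k+1) lam hlam).subtype _
    set F : (Σ m : ℤ, {g : Fin k → ℤ // ∑ i, g i = T - m}) → ℂ :=
      fun p => Λ ^ p.1.natAbs * ∏ i, μ i ^ ((p.2 : Fin k → ℤ) i).natAbs with hF
    have hFe : (fun f : {f : Fin (k+1) → ℤ // ∑ i, f i = T} =>
        ∏ i, lam i ^ ((f : Fin (k+1) → ℤ) i).natAbs) = F ∘ (aux_equiv k T) := by
      funext f
      show ∏ i, lam i ^ ((f : Fin (k+1) → ℤ) i).natAbs = F ((aux_equiv k T) f)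
      obtain ⟨h1, h2⟩ := aux_equiv_spec k T f
      show _ = Λ ^ ((aux_equiv k T f).1).natAbs *
        ∏ i : Fin k, μ i ^ (((aux_equiv k T f).2 : Fin k → ℤ) i).natAbs
      have h3 : Λ ^ ((aux_equiv k T f).1).natAbs
          = lam (Fin.last k) ^ ((f : Fin (k+1) → ℤ) (Fin.last k)).natAbs := by rw [h1]
      have h4 : (∏ i : Fin k, μ i ^ (((aux_equiv k T f).2 : Fin k → ℤ) i).natAbs)
          = ∏ i : Fin k, lam i.castSucc ^ ((f : Fin (k+1) → ℤ) i.castSucc).natAbs :=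
        Finset.prod_congr rfl (fun i _ => by rw [h2 i])
      rw [h3, h4, Fin.prod_univ_castSucc]
      exact (mul_comm _ _).symm
    have hFs : Summable F := (aux_equiv k T).summable_iff.mp (by rw [← hFe]; exact hsub0)
    have hstep1 : (∑' f : {f : Fin (k+1) → ℤ // ∑ i, f i = T},
        ∏ i, lam i ^ ((f : Fin (k+1) → ℤ) i).natAbs)
        = ∑' (m : ℤ) (g : {g : Fin k → ℤ // ∑ i, g i = T - m}), F ⟨m, g⟩ := by
      calc (∑' f : {f : Fin (k+1) → ℤ // ∑ i, f i = T},
            ∏ i, lam i ^ ((f : Fin (k+1) → ℤ) i).natAbs)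
          = ∑' f : {f : Fin (k+1) → ℤ // ∑ i, f i = T}, F (aux_equiv k T f) :=
            tsum_congr (fun f => congrFun hFe f)
        _ = ∑' p, F p := (aux_equiv k T).tsum_eq F
        _ = ∑' (m : ℤ) (g : {g : Fin k → ℤ // ∑ i, g i = T - m}), F ⟨m, g⟩ :=
            hFs.tsum_sigma' (fun m => hFs.sigma_factor m)
    rw [hstep1]
    -- inner sums
    have hinner : ∀ m : ℤ,
        (∑' g : {g : Fin k → ℤ // ∑ i, g i = T - m}, F ⟨m, g⟩)
        = ∑ j, (Λ ^ m.natAbs * μ j ^ (T - m).natAbs) *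
            (μ j ^ (k-1) * ∏ l ∈ univ.erase j,
              (1 - μ l ^ 2) / ((μ j - μ l) * (1 - μ j * μ l))) := by
      intro m
      have : (∑' g : {g : Fin k → ℤ // ∑ i, g i = T - m}, F ⟨m, g⟩)
          = Λ ^ m.natAbs * ∑' g : {g : Fin k → ℤ // ∑ i, g i = T - m},
              ∏ i, μ i ^ ((g : Fin k → ℤ) i).natAbs := by
        rw [← tsum_mul_left]
      rw [this, ih μ hμlt hμ0 hμinj (T - m), Finset.mul_sum]
      apply Finset.sum_congr rfl
      intro j _
      have he : (T - m).natAbs + k - 1 = (T - m).natAbs + (k - 1) := by omega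
      rw [he, pow_add]
      ring
    rw [tsum_congr hinner]
    -- swap sum and tsum
    have hsj : ∀ j : Fin k, Summable (fun m : ℤ => Λ ^ m.natAbs * μ j ^ (T - m).natAbs) :=
      fun j => (aux_hasSum_two' T (hμlt j) hΛlt (hμΛ j)).summable
    rw [Summable.tsum_finsetSum (fun j _ => (hsj j).mul_right _)]
    -- evaluate each inner tsum
    have hval : ∀ j : Fin k,
        (∑' m : ℤ, (Λ ^ m.natAbs * μ j ^ (T - m).natAbs) *
          (μ j ^ (k-1) * ∏ l ∈ univ.erase j,
            (1 - μ l ^ 2) / ((μ j - μ l) * (1 - μ j * μ l))))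
        = (μ j ^ (T.natAbs+1) * (1 - Λ^2) / ((μ j - Λ) * (1 - μ j * Λ)) +
           Λ ^ (T.natAbs+1) * (1 - μ j^2) / ((Λ - μ j) * (1 - μ j * Λ))) *
          (μ j ^ (k-1) * ∏ l ∈ univ.erase j,
            (1 - μ l ^ 2) / ((μ j - μ l) * (1 - μ j * μ l))) := by
      intro j
      rw [tsum_mul_right, (aux_hasSum_two' T (hμlt j) hΛlt (hμΛ j)).tsum_eq]
    rw [Finset.sum_congr rfl (fun j _ => hval j)]
    -- split the sum into two parts
    have hsplit : ∀ j : Fin k,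
        (μ j ^ (T.natAbs+1) * (1 - Λ^2) / ((μ j - Λ) * (1 - μ j * Λ)) +
           Λ ^ (T.natAbs+1) * (1 - μ j^2) / ((Λ - μ j) * (1 - μ j * Λ))) *
          (μ j ^ (k-1) * ∏ l ∈ univ.erase j,
            (1 - μ l ^ 2) / ((μ j - μ l) * (1 - μ j * μ l)))
        = μ j ^ (T.natAbs + k) * ((1 - Λ^2) / ((μ j - Λ) * (1 - μ j * Λ)) *
            ∏ l ∈ univ.erase j, (1 - μ l ^ 2) / ((μ j - μ l) * (1 - μ j * μ l)))
          + Λ ^ (T.natAbs+1) * (1 - μ j^2) / ((Λ - μ j) * (1 - μ j * Λ)) *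
            (μ j ^ (k-1) * ∏ l ∈ univ.erase j,
              (1 - μ l ^ 2) / ((μ j - μ l) * (1 - μ j * μ l))) := by
      intro j
      have hpow : μ j ^ (T.natAbs+1) * μ j ^ (k-1) = μ j ^ (T.natAbs + k) := by
        rw [← pow_add]; congr 1; omega
      rw [← hpow]
      ring
    rw [Finset.sum_congr rfl (fun j _ => hsplit j), Finset.sum_add_distrib]
    -- Part 2 via keyPoly
    have hΛsub : ∀ l, Λ - μ l ≠ 0 := fun l => sub_ne_zero.mpr (fun h => hμΛ l h.symm)
    have hμsub : ∀ l, μ l - Λ ≠ 0 := fun l => sub_ne_zero.mpr (hμΛ l)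
    have h1Λμ : ∀ l, 1 - Λ * μ l ≠ 0 :=
      fun l h => hone Λ (μ l) hΛlt (hμlt l) (by linear_combination -h)
    have h1μΛ : ∀ l, 1 - μ l * Λ ≠ 0 :=
      fun l h => hone (μ l) Λ (hμlt l) hΛlt (by linear_combination -h)
    have h1μμ : ∀ l l', 1 - μ l * μ l' ≠ 0 :=
      fun l l' h => hone (μ l) (μ l') (hμlt l) (hμlt l') (by linear_combination -h)
    have hdK : ∀ j : Fin k, (∏ l ∈ univ.erase j, ((μ j - μ l) * (1 - μ j * μ l))) ≠ 0 := by
      intro j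
      apply Finset.prod_ne_zero_iff.mpr
      intro l hl
      rw [Finset.mem_erase] at hl
      exact mul_ne_zero (sub_ne_zero.mpr (fun h => hl.1 (hμinj h).symm)) (h1μμ j l)
    have hNK : ∀ j : Fin k, (∏ l ∈ univ.erase j, ((Λ - μ l) * (1 - Λ * μ l))) ≠ 0 := by
      intro j
      apply Finset.prod_ne_zero_iff.mpr
      intro l hl
      exact mul_ne_zero (hΛsub l) (h1Λμ l)
    have hWfull : ∀ j : Fin k, (∏ l : Fin k, ((Λ - μ l) * (1 - Λ * μ l)))
        = ((Λ - μ j) * (1 - Λ * μ j)) * ∏ l ∈ univ.erase j, ((Λ - μ l) * (1 - Λ * μ l)) :=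
      fun j => (Finset.mul_prod_erase univ _ (Finset.mem_univ j)).symm
    have hEfull : ∀ j : Fin k, (∏ l : Fin k, (1 - μ l ^ 2))
        = (1 - μ j ^ 2) * ∏ l ∈ univ.erase j, (1 - μ l ^ 2) :=
      fun j => (Finset.mul_prod_erase univ _ (Finset.mem_univ j)).symm
    have hpart2 :
        (∑ j : Fin k, Λ ^ (T.natAbs+1) * (1 - μ j^2) / ((Λ - μ j) * (1 - μ j * Λ)) *
          (μ j ^ (k-1) * ∏ l ∈ univ.erase j,
            (1 - μ l ^ 2) / ((μ j - μ l) * (1 - μ j * μ l))))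
        = Λ ^ (T.natAbs + k) *
            ∏ l : Fin k, (1 - μ l ^ 2) / ((Λ - μ l) * (1 - Λ * μ l)) := by
      have hterm : ∀ j : Fin k,
          Λ ^ (T.natAbs+1) * (1 - μ j^2) / ((Λ - μ j) * (1 - μ j * Λ)) *
            (μ j ^ (k-1) * ∏ l ∈ univ.erase j,
              (1 - μ l ^ 2) / ((μ j - μ l) * (1 - μ j * μ l)))
          = (Λ ^ (T.natAbs+1) * (∏ l : Fin k, (1 - μ l ^ 2)) /
              (∏ l : Fin k, ((Λ - μ l) * (1 - Λ * μ l)))) *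
            (μ j ^ (k-1) / (∏ l ∈ univ.erase j, ((μ j - μ l) * (1 - μ j * μ l))) *
              ∏ l ∈ univ.erase j, ((Λ - μ l) * (1 - Λ * μ l))) := by
        intro j
        rw [Finset.prod_div_distrib, hWfull j, hEfull j]
        field_simp [hΛsub j, hμsub j, h1μΛ j, h1Λμ j, hdK j, hNK j]
      rw [Finset.sum_congr rfl (fun j _ => hterm j), ← Finset.mul_sum,
        aux_keyPoly k hk μ hμ0 hμinj (fun i j => hone _ _ (hμlt i) (hμlt j)) Λ]
      rw [Finset.prod_div_distrib]
      have hpow : Λ ^ (T.natAbs+1) * Λ ^ (k-1) = Λ ^ (T.natAbs + k) := by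
        rw [← pow_add]; congr 1; omega
      rw [← hpow]
      ring
    rw [hpart2]
    -- match with the RHS
    have hNk : T.natAbs + (k+1) - 1 = T.natAbs + k := by omega
    rw [Fin.sum_univ_castSucc]
    congr 1
    · apply Finset.sum_congr rfl
      intro j _
      rw [hNk, aux_prod_erase_castSucc k j
        (fun l => (1 - lam l ^ 2) / ((lam j.castSucc - lam l) * (1 - lam j.castSucc * lam l)))]
    · rw [hNk, aux_prod_erase_last k
        (fun l => (1 - lam l ^ 2) / ((lam (Fin.last k) - lam l) * (1 - lam (Fin.last k) * lam l)))]


/-- For pairwise distinct λ's with 0 < |λ_i| < 1 and S ≥ 0,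
∑_{m₁+⋯+m_k=S} ∏ λ_i^{|m_i|} = ∑_j λ_j^{S+k-1} ∏_{ℓ≠j} (1-λ_ℓ²)/((λ_j-λ_ℓ)(1-λ_jλ_ℓ)). -/
theorem stmt5 (k : ℕ) (hk : 1 ≤ k) (lam : Fin k → ℂ)
    (hlam : ∀ i, ‖lam i‖ < 1) (hne : ∀ i, lam i ≠ 0)
    (hdist : Function.Injective lam) (S : ℕ) :
    ∑' m : {f : Fin k → ℤ // ∑ i, f i = (S : ℤ)},
        ∏ i, lam i ^ ((m : Fin k → ℤ) i).natAbs
      = ∑ j, lam j ^ (S + k - 1) *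
          ∏ l ∈ Finset.univ.erase j,
            (1 - lam l ^ 2) / ((lam j - lam l) * (1 - lam j * lam l)) := by
  have h := aux_main k hk lam hlam hne hdist (S : ℤ)
  simpa using h
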